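/- Let n and k be integers with 1 ≤ k ≤ n, let μ be the product of n independent copies of the uniform probability measure on [0,1], and let τ : [0,1]^n → ℝ send each point to its k-th smallest coordinate. Then the pushforward measure of μ under τ is the Beta distribution with parameters k and n−k+1. -/

import Mathlib

open MeasureTheory Finset
open scoped ENNReal

/-- The `k`-th smallest coordinate (the `k`-th order statistic) of a point of `[0,1]^n`
(more generally of `ℝ^n`). -/
noncomputable def kthSmallest (n k : ℕ) (x : Fin n → ℝ) : ℝ :=
  (List.insertionSort (· ≤ ·) (List.ofFn x)).getD (k - 1) 0

/-- The product of `n` independent copies of the uniform probability measure on `[0,1]`. -/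
noncomputable def unifCube (n : ℕ) : Measure (Fin n → ℝ) :=
  Measure.pi fun _ => volume.restrict (Set.Icc 0 1)

/-- The Beta distribution with parameters `a` and `b`: the measure on `ℝ` supported on
`(0,1)` with density `x^(a-1) * (1-x)^(b-1) / B(a,b)`, where
`B(a,b) = Γ(a)Γ(b)/Γ(a+b)` is the Beta function. -/
noncomputable def betaMeasure (a b : ℝ) : Measure ℝ :=
  volume.withDensity fun x =>
    ENNReal.ofReal (if x ∈ Set.Ioo (0 : ℝ) 1 then
      x ^ (a - 1) * (1 - x) ^ (b - 1) / (Real.Gamma a * Real.Gamma b / Real.Gamma (a + b))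
    else 0)

lemma countP_ofFn {n : ℕ} (x : Fin n → ℝ) (p : ℝ → Bool) :
    (List.ofFn x).countP p = (Finset.univ.filter fun i => p (x i)).card := by
  induction n with
  | zero => simp
  | succ m ih =>
    rw [List.ofFn_succ, List.countP_cons, Fin.card_filter_univ_succ' (fun i => p (x i) = true)]
    rw [ih (fun i => x i.succ)]
    simp [add_comm]

lemma kth_le_iff {n k : ℕ} (hk : 1 ≤ k) (hkn : k ≤ n) (x : Fin n → ℝ) (t : ℝ) :
    kthSmallest n k x ≤ t ↔ k ≤ (Finset.univ.filter fun i => x i ≤ t).card := by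
  classical
  set l := List.insertionSort (· ≤ ·) (List.ofFn x) with hl
  have hlen : l.length = n := (List.perm_insertionSort _ _).length_eq.trans List.length_ofFn
  have hsort : l.Pairwise (· ≤ ·) := List.pairwise_insertionSort _ _
  have hcount : l.countP (fun a => decide (a ≤ t)) = (Finset.univ.filter fun i => x i ≤ t).card := by
    rw [(List.perm_insertionSort (· ≤ ·) (List.ofFn x)).countP_eq, countP_ofFn]
    simp
  have hik : k - 1 < l.length := by omega
  have hkth : kthSmallest n k x = l.get ⟨k - 1, hik⟩ := by
    rw [kthSmallest, ← hl, List.getD_eq_getElem l 0 hik]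
    rfl
  rw [hkth, ← hcount]
  constructor
  · intro h
    have h1 : l.countP (fun a => decide (a ≤ t)) =
        (l.take k).countP (fun a => decide (a ≤ t)) +
        (l.drop k).countP (fun a => decide (a ≤ t)) := by
      rw [← List.countP_append, List.take_append_drop]
    have h2 : (l.take k).countP (fun a => decide (a ≤ t)) = (l.take k).length := by
      rw [List.countP_eq_length]
      intro a ha
      obtain ⟨i, hi, rfl⟩ := List.getElem_of_mem ha
      rw [List.getElem_take]
      have hil : i < l.length := by
        have := (List.length_take (i := k) (l := l)) ▸ hi; omega
      have : l.get ⟨i, hil⟩ ≤ l.get ⟨k-1, hik⟩ := by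
        apply hsort.rel_get_of_le
        simp only [Fin.mk_le_mk]
        have := (List.length_take (i := k) (l := l)) ▸ hi
        omega
      simpa using le_trans this h
    have h3 : (l.take k).length = k := by
      rw [List.length_take]; omega
    omega
  · intro h
    by_contra hc
    push_neg at hc
    have h1 : l.countP (fun a => decide (a ≤ t)) =
        (l.take (k-1)).countP (fun a => decide (a ≤ t)) +
        (l.drop (k-1)).countP (fun a => decide (a ≤ t)) := by
      rw [← List.countP_append, List.take_append_drop]
    have h2 : (l.drop (k-1)).countP (fun a => decide (a ≤ t)) = 0 := by
      rw [List.countP_eq_zero]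
      intro a ha
      obtain ⟨i, hi, rfl⟩ := List.getElem_of_mem ha
      rw [List.getElem_drop]
      have hil : k - 1 + i < l.length := by
        have := (List.length_drop (i := k-1) (l := l)) ▸ hi; omega
      have : l.get ⟨k-1, hik⟩ ≤ l.get ⟨k-1+i, hil⟩ := by
        apply hsort.rel_get_of_le
        simp only [Fin.mk_le_mk]
        omega
      simp only [decide_eq_true_eq, not_le]
      exact lt_of_lt_of_le hc this
    have h4 : (l.take (k-1)).countP (fun a => decide (a ≤ t)) ≤ (l.take (k-1)).length :=
      List.countP_le_length
    have h5 : (l.take (k-1)).length ≤ k - 1 := by rw [List.length_take]; omega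
    omega

def cutSet (n : ℕ) (t : ℝ) (S : Finset (Fin n)) : Set (Fin n → ℝ) :=
  Set.univ.pi fun i => if i ∈ S then Set.Iic t else Set.Ioi t

lemma mem_cutSet_iff {n : ℕ} {t : ℝ} {S : Finset (Fin n)} {x : Fin n → ℝ} :
    x ∈ cutSet n t S ↔ ∀ i, (x i ≤ t ↔ i ∈ S) := by
  simp only [cutSet, Set.mem_pi, Set.mem_univ, forall_true_left]
  refine forall_congr' fun i => ?_
  by_cases h : i ∈ S <;> simp [h]

lemma measurableSet_cutSet {n : ℕ} {t : ℝ} {S : Finset (Fin n)} :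
    MeasurableSet (cutSet n t S) := by
  apply MeasurableSet.univ_pi
  intro i
  by_cases h : i ∈ S <;> simp [h, measurableSet_Iic, measurableSet_Ioi]

lemma cut_decomp {n k : ℕ} {t : ℝ} :
    {x : Fin n → ℝ | k ≤ (Finset.univ.filter fun i => x i ≤ t).card} =
    ⋃ S ∈ Finset.univ.filter (fun S : Finset (Fin n) => k ≤ S.card), cutSet n t S := by
  classical
  ext x
  simp only [Set.mem_setOf_eq, Set.mem_iUnion, Finset.mem_filter, Finset.mem_univ, true_and]
  constructor
  · intro h
    exact ⟨Finset.univ.filter fun i => x i ≤ t, h, mem_cutSet_iff.2 fun i => by simp⟩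
  · rintro ⟨S, hS, hx⟩
    have : S = Finset.univ.filter fun i => x i ≤ t := by
      ext i
      simp [← mem_cutSet_iff.1 hx i]
    rwa [this] at hS

lemma measurableSet_count {n k : ℕ} {t : ℝ} :
    MeasurableSet {x : Fin n → ℝ | k ≤ (Finset.univ.filter fun i => x i ≤ t).card} := by
  rw [cut_decomp]
  exact (Finset.univ.filter _).measurableSet_biUnion fun S _ => measurableSet_cutSet

lemma measurable_kthSmallest (n k : ℕ) (hk : 1 ≤ k) (hkn : k ≤ n) :
    Measurable (kthSmallest n k) := by
  apply measurable_of_Iic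
  intro t
  have : kthSmallest n k ⁻¹' Set.Iic t =
      {x : Fin n → ℝ | k ≤ (Finset.univ.filter fun i => x i ≤ t).card} := by
    ext x; exact kth_le_iff hk hkn x t
  rw [this]
  exact measurableSet_count

lemma cutSet_measure {n : ℕ} {t : ℝ} (ht0 : 0 ≤ t) (ht1 : t ≤ 1) (S : Finset (Fin n)) :
    unifCube n (cutSet n t S) =
      ENNReal.ofReal t ^ S.card * ENNReal.ofReal (1 - t) ^ (n - S.card) := by
  classical
  have h1 : (volume.restrict (Set.Icc (0:ℝ) 1)) (Set.Iic t) = ENNReal.ofReal t := by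
    rw [Measure.restrict_apply measurableSet_Iic]
    have : Set.Iic t ∩ Set.Icc (0:ℝ) 1 = Set.Icc 0 t := by
      ext y; simp only [Set.mem_inter_iff, Set.mem_Iic, Set.mem_Icc]
      constructor
      · rintro ⟨h, h0, _⟩; exact ⟨h0, h⟩
      · rintro ⟨h0, h⟩; exact ⟨h, h0, h.trans ht1⟩
    rw [this, Real.volume_Icc, sub_zero]
  have h2 : (volume.restrict (Set.Icc (0:ℝ) 1)) (Set.Ioi t) = ENNReal.ofReal (1 - t) := by
    rw [Measure.restrict_apply measurableSet_Ioi]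
    have : Set.Ioi t ∩ Set.Icc (0:ℝ) 1 = Set.Ioc t 1 := by
      ext y; simp only [Set.mem_inter_iff, Set.mem_Ioi, Set.mem_Icc, Set.mem_Ioc]
      constructor
      · rintro ⟨h, _, h1'⟩; exact ⟨h, h1'⟩
      · rintro ⟨h, h1'⟩; exact ⟨h, ht0.trans h.le, h1'⟩
    rw [this, Real.volume_Ioc]
  rw [unifCube, cutSet, Measure.pi_pi]
  have : ∀ i : Fin n, (volume.restrict (Set.Icc (0:ℝ) 1))
      (if i ∈ S then Set.Iic t else Set.Ioi t) =
      (if i ∈ S then ENNReal.ofReal t else ENNReal.ofReal (1 - t)) := by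
    intro i; by_cases h : i ∈ S <;> simp [h, h1, h2]
  rw [Finset.prod_congr rfl fun i _ => this i, Finset.prod_ite, Finset.prod_const,
    Finset.prod_const]
  congr 1
  · congr 1
    rw [Finset.filter_mem_eq_inter, Finset.univ_inter]
  · congr 1
    have : (Finset.univ.filter fun i => i ∉ S) = Sᶜ := by
      ext i; simp
    rw [this, Finset.card_compl, Fintype.card_fin]

lemma count_measure {n k : ℕ} {t : ℝ} (ht0 : 0 ≤ t) (ht1 : t ≤ 1) :
    unifCube n {x : Fin n → ℝ | k ≤ (Finset.univ.filter fun i => x i ≤ t).card} =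
      ∑ j ∈ Finset.Icc k n, (n.choose j : ℝ≥0∞) *
        (ENNReal.ofReal t ^ j * ENNReal.ofReal (1 - t) ^ (n - j)) := by
  classical
  rw [cut_decomp]
  rw [measure_biUnion_finset ?_ fun S _ => measurableSet_cutSet]
  · have hT : (Finset.univ.filter fun S : Finset (Fin n) => k ≤ S.card) =
        (Finset.Icc k n).biUnion fun j => Finset.powersetCard j Finset.univ := by
      ext S
      simp only [Finset.mem_filter, Finset.mem_univ, true_and, Finset.mem_biUnion,
        Finset.mem_Icc, Finset.mem_powersetCard_univ]
      constructor
      · intro h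
        exact ⟨S.card, ⟨h, by simpa using Finset.card_le_univ S⟩, rfl⟩
      · rintro ⟨j, ⟨hj, _⟩, rfl⟩; exact hj
    rw [hT, Finset.sum_biUnion]
    · refine Finset.sum_congr rfl fun j hj => ?_
      have : ∀ S ∈ Finset.powersetCard j (Finset.univ : Finset (Fin n)),
          unifCube n (cutSet n t S) =
          ENNReal.ofReal t ^ j * ENNReal.ofReal (1 - t) ^ (n - j) := by
        intro S hS
        rw [cutSet_measure ht0 ht1, Finset.mem_powersetCard_univ.1 hS]
      rw [Finset.sum_congr rfl this, Finset.sum_const, Finset.card_powersetCard,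
        Finset.card_fin, nsmul_eq_mul]
    · intro a _ b _ hab
      simp only [Function.onFun, Finset.disjoint_left]
      intro S hS hS'
      exact hab ((Finset.mem_powersetCard_univ.1 hS).symm.trans
        (Finset.mem_powersetCard_univ.1 hS'))
  · intro S hS S' hS' hne
    simp only [Function.onFun, Set.disjoint_left]
    intro x hx hx'
    apply hne
    have h1 := mem_cutSet_iff.1 hx
    have h2 := mem_cutSet_iff.1 hx'
    ext i
    rw [← h1 i, h2 i]

lemma choose_id1 {n j : ℕ} (hj : 1 ≤ j) (hn : 1 ≤ n) :
    n.choose j * j = n * (n - 1).choose (j - 1) := by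
  obtain ⟨m, rfl⟩ := Nat.exists_eq_add_of_le hn
  obtain ⟨i, rfl⟩ := Nat.exists_eq_add_of_le hj
  simp only [Nat.add_sub_cancel_left, Nat.add_sub_cancel]
  rw [mul_comm (1 + m)]
  have := Nat.add_one_mul_choose_eq m i
  rw [add_comm 1 m, add_comm 1 i, ← this, mul_comm]

lemma choose_id2 {n j : ℕ} (hn : 1 ≤ n) :
    n.choose j * (n - j) = n * (n - 1).choose j := by
  obtain ⟨m, rfl⟩ := Nat.exists_eq_add_of_le hn
  simp only [Nat.add_sub_cancel_left]
  have h1 := Nat.choose_succ_right_eq (1 + m) j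
  have h2 := Nat.add_one_mul_choose_eq m j
  rw [← h1, add_comm 1 m, ← h2, mul_comm]

def gpoly (n k : ℕ) (t : ℝ) : ℝ :=
  ∑ j ∈ Finset.Icc k n, (n.choose j : ℝ) * (t ^ j * (1 - t) ^ (n - j))

def Fp (n j : ℕ) (t : ℝ) : ℝ :=
  (n : ℝ) * ((n - 1).choose j : ℝ) * (t ^ j * (1 - t) ^ (n - 1 - j))

lemma term_deriv {n j : ℕ} (hj1 : 1 ≤ j) (hjn : j ≤ n) (t : ℝ) :
    HasDerivAt (fun s => (n.choose j : ℝ) * (s ^ j * (1 - s) ^ (n - j)))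
      (Fp n (j - 1) t - Fp n j t) t := by
  have h1 : HasDerivAt (fun s : ℝ => s ^ j) ((j : ℝ) * t ^ (j - 1)) t := hasDerivAt_pow j t
  have hinner : HasDerivAt (fun s : ℝ => 1 - s) (-1) t := by
    simpa using (hasDerivAt_id t).const_sub 1
  have h2 : HasDerivAt (fun s : ℝ => (1 - s) ^ (n - j))
      (((n - j : ℕ) : ℝ) * (1 - t) ^ (n - j - 1) * (-1)) t := hinner.pow (n - j)
  have h3 := (h1.fun_mul h2).const_mul ((n.choose j : ℝ))
  refine h3.congr_deriv (Eq.symm ?_)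
  have hn1 : 1 ≤ n := le_trans hj1 hjn
  have e1 : n - 1 - (j - 1) = n - j := by omega
  have e2 : n - 1 - j = n - j - 1 := by omega
  have c1 : ((n.choose j : ℕ) : ℝ) * (j : ℝ) = (n : ℝ) * ((n-1).choose (j-1) : ℝ) := by
    rw [← Nat.cast_mul, ← Nat.cast_mul, choose_id1 hj1 hn1]
  have c2 : ((n.choose j : ℕ) : ℝ) * ((n - j : ℕ) : ℝ) = (n : ℝ) * ((n-1).choose j : ℝ) := by
    rw [← Nat.cast_mul, ← Nat.cast_mul, choose_id2 hn1]
  simp only [Fp, e1, e2]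
  linear_combination (-(t^(j-1)*(1-t)^(n-j))) * c1 + (t^j*(1-t)^(n-j-1)) * c2

lemma gpoly_hasDerivAt {n k : ℕ} (hk : 1 ≤ k) (hkn : k ≤ n) (t : ℝ) :
    HasDerivAt (gpoly n k)
      ((n : ℝ) * ((n - 1).choose (k - 1) : ℝ) * (t ^ (k - 1) * (1 - t) ^ (n - k))) t := by
  have hd : HasDerivAt (fun s => ∑ j ∈ Finset.Icc k n,
      (n.choose j : ℝ) * (s ^ j * (1 - s) ^ (n - j)))
      (∑ j ∈ Finset.Icc k n, (Fp n (j - 1) t - Fp n j t)) t := by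
    apply HasDerivAt.fun_sum
    intro j hj
    rw [Finset.mem_Icc] at hj
    exact term_deriv (le_trans hk hj.1) hj.2 t
  have hsum : (∑ j ∈ Finset.Icc k n, (Fp n (j - 1) t - Fp n j t)) =
      (n : ℝ) * ((n - 1).choose (k - 1) : ℝ) * (t ^ (k - 1) * (1 - t) ^ (n - k)) := by
    rw [← Finset.Ico_add_one_right_eq_Icc, Finset.sum_Ico_eq_sum_range]
    have : ∀ i ∈ Finset.range (n + 1 - k),
        (Fp n (k + i - 1) t - Fp n (k + i) t) =
        ((fun i => Fp n (k - 1 + i) t) i - (fun i => Fp n (k - 1 + i) t) (i + 1)) := by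
      intro i _
      have e1 : k + i - 1 = k - 1 + i := by omega
      have e2 : k + i = k - 1 + (i + 1) := by omega
      rw [e1, e2]
    rw [Finset.sum_congr rfl this, Finset.sum_range_sub']
    have e3 : k - 1 + (n + 1 - k) = n := by omega
    rw [e3]
    have : Fp n n t = 0 := by
      have : (n - 1).choose n = 0 := Nat.choose_eq_zero_of_lt (by omega)
      simp [Fp, this]
    have e4 : n - 1 - (k - 1 + 0) = n - k := by omega
    have e5 : k - 1 + 0 = k - 1 := by omega
    rw [this, sub_zero, Fp, e4, e5]
  rw [← hsum]
  exact hd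

lemma gpoly_zero {n k : ℕ} (hk : 1 ≤ k) : gpoly n k 0 = 0 := by
  apply Finset.sum_eq_zero
  intro j hj
  rw [Finset.mem_Icc] at hj
  have : (0:ℝ) ^ j = 0 := zero_pow (by omega)
  simp [this]

lemma gpoly_one {n k : ℕ} (hkn : k ≤ n) : gpoly n k 1 = 1 := by
  rw [gpoly, Finset.sum_eq_single n]
  · simp
  · intro j hj hne
    rw [Finset.mem_Icc] at hj
    have : (1:ℝ) - 1 = 0 := by ring
    rw [this, zero_pow (by omega)]
    ring
  · intro h
    exact absurd (Finset.mem_Icc.2 ⟨hkn, le_refl n⟩) h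

lemma Creal_eq {n k : ℕ} (hk : 1 ≤ k) (hkn : k ≤ n) :
    Real.Gamma (k : ℝ) * Real.Gamma ((n : ℝ) - (k : ℝ) + 1) /
      Real.Gamma ((k : ℝ) + ((n : ℝ) - (k : ℝ) + 1)) =
      ((k - 1).factorial : ℝ) * ((n - k).factorial : ℝ) / (n.factorial : ℝ) := by
  have h1 : (k : ℝ) = ((k - 1 : ℕ) : ℝ) + 1 := by
    push_cast [Nat.cast_sub hk]; ring
  have h2 : (n : ℝ) - (k : ℝ) + 1 = ((n - k : ℕ) : ℝ) + 1 := by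
    push_cast [Nat.cast_sub hkn]; ring
  have h3 : (k : ℝ) + ((n : ℝ) - (k : ℝ) + 1) = (n : ℝ) + 1 := by ring
  rw [h3, h2]
  nth_rewrite 1 [h1]
  rw [Real.Gamma_nat_eq_factorial, Real.Gamma_nat_eq_factorial, Real.Gamma_nat_eq_factorial]

lemma MC_eq_one {n k : ℕ} (hk : 1 ≤ k) (hkn : k ≤ n) :
    (n : ℝ) * ((n - 1).choose (k - 1) : ℝ) *
      (((k - 1).factorial : ℝ) * ((n - k).factorial : ℝ) / (n.factorial : ℝ)) = 1 := by
  have hnat : n * ((n - 1).choose (k - 1) * (k - 1).factorial * (n - k).factorial) =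
      n.factorial := by
    have h := Nat.choose_mul_factorial_mul_factorial (show k - 1 ≤ n - 1 by omega)
    have e : n - 1 - (k - 1) = n - k := by omega
    rw [e] at h
    rw [h]
    have : n = n - 1 + 1 := by omega
    rw [this, Nat.factorial_succ]
    simp
  have hne : (n.factorial : ℝ) ≠ 0 := Nat.cast_ne_zero.2 (Nat.factorial_ne_zero n)
  field_simp
  calc (n : ℝ) * ((n - 1).choose (k - 1) : ℝ) * ((k - 1).factorial : ℝ) * ((n - k).factorial : ℝ)
      = ((n * ((n - 1).choose (k - 1) * (k - 1).factorial * (n - k).factorial) : ℕ) : ℝ) := by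
        push_cast; ring
    _ = (n.factorial : ℝ) := by rw [hnat]

lemma beta_density_eq {n k : ℕ} (hk : 1 ≤ k) (hkn : k ≤ n) :
    (fun x : ℝ => ENNReal.ofReal (if x ∈ Set.Ioo (0 : ℝ) 1 then
      x ^ ((k:ℝ) - 1) * (1 - x) ^ ((n:ℝ) - (k:ℝ) + 1 - 1) /
        (Real.Gamma (k:ℝ) * Real.Gamma ((n:ℝ)-(k:ℝ)+1) /
          Real.Gamma ((k:ℝ) + ((n:ℝ)-(k:ℝ)+1)))
    else 0)) =
    (Set.Ioo (0:ℝ) 1).indicator (fun x => ENNReal.ofReal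
      (x ^ (k-1 : ℕ) * (1-x) ^ (n-k : ℕ) /
       (((k-1).factorial : ℝ) * ((n-k).factorial : ℝ) / (n.factorial : ℝ)))) := by
  funext x
  rw [Creal_eq hk hkn]
  have e1 : ((k:ℝ) - 1) = ((k-1:ℕ):ℝ) := by push_cast [Nat.cast_sub hk]; ring
  have e2 : ((n:ℝ) - (k:ℝ) + 1 - 1) = ((n-k:ℕ):ℝ) := by push_cast [Nat.cast_sub hkn]; ring
  rw [e1, e2, Real.rpow_natCast, Real.rpow_natCast]
  by_cases h : x ∈ Set.Ioo (0:ℝ) 1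
  · rw [if_pos h, Set.indicator_of_mem h]
  · rw [if_neg h, Set.indicator_of_notMem h, ENNReal.ofReal_zero]

lemma beta_Iic {n k : ℕ} (hk : 1 ≤ k) (hkn : k ≤ n) {t : ℝ} (ht0 : 0 ≤ t) (ht1 : t ≤ 1) :
    betaMeasure (k : ℝ) ((n:ℝ) - (k:ℝ) + 1) (Set.Iic t) = ENNReal.ofReal (gpoly n k t) := by
  set C : ℝ := ((k-1).factorial : ℝ) * ((n-k).factorial : ℝ) / (n.factorial : ℝ) with hC
  have hCpos : 0 < C := by positivity
  set M : ℝ := (n : ℝ) * (((n - 1).choose (k - 1) : ℕ) : ℝ) with hM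
  have hMC : M * C = 1 := MC_eq_one hk hkn
  set h : ℝ → ℝ := fun x => x ^ (k-1 : ℕ) * (1-x) ^ (n-k : ℕ) / C with hh
  have hcont : Continuous h := by
    apply Continuous.div_const
    exact (continuous_pow _).mul ((continuous_const.sub continuous_id).pow _)
  rw [betaMeasure, withDensity_apply _ measurableSet_Iic, beta_density_eq hk hkn,
    lintegral_indicator measurableSet_Ioo, Measure.restrict_restrict measurableSet_Ioo]
  have hset : Set.Ioc (0:ℝ) 1 ∩ Set.Iic t = Set.Ioc 0 t := by
    ext y
    simp only [Set.mem_inter_iff, Set.mem_Ioc, Set.mem_Iic]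
    constructor
    · rintro ⟨⟨hy0, _⟩, hyt⟩; exact ⟨hy0, hyt⟩
    · rintro ⟨hy0, hyt⟩; exact ⟨⟨hy0, hyt.trans ht1⟩, hyt⟩
  have hae : (Set.Ioo (0:ℝ) 1 ∩ Set.Iic t : Set ℝ) =ᵐ[volume] (Set.Ioc 0 t : Set ℝ) := by
    have h1 : (Set.Ioo (0:ℝ) 1 ∩ Set.Iic t : Set ℝ) =ᵐ[volume] (Set.Ioc 0 1 ∩ Set.Iic t : Set ℝ) :=
      ae_eq_set_inter Ioo_ae_eq_Ioc (ae_eq_refl _)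
    rwa [hset] at h1
  rw [Measure.restrict_congr_set hae]
  have hint : IntegrableOn h (Set.Ioc 0 t) volume :=
    hcont.integrableOn_Ioc
  have hnn : 0 ≤ᵐ[volume.restrict (Set.Ioc 0 t)] h := by
    rw [Filter.EventuallyLE, ae_restrict_iff' measurableSet_Ioc]
    filter_upwards with y hy
    have hy0 : 0 < y := hy.1
    have hy1 : y ≤ 1 := hy.2.trans ht1
    rw [hh]
    have : (0:ℝ) ≤ 1 - y := by linarith
    positivity
  rw [← ofReal_integral_eq_lintegral_ofReal hint hnn]
  congr 1
  have hmono : ∀ x : ℝ, h x = M * (x ^ (k-1:ℕ) * (1-x) ^ (n-k:ℕ)) := by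
    intro x
    rw [hh]
    simp only []
    rw [div_eq_mul_inv, inv_eq_of_mul_eq_one_left hMC, mul_comm]
  have key : ∫ x in Set.Ioc 0 t, h x = gpoly n k t := by
    rw [← intervalIntegral.integral_of_le ht0]
    have hderiv : ∀ x ∈ Set.uIcc (0:ℝ) t, HasDerivAt (gpoly n k) (h x) x := by
      intro x _
      rw [hmono x]
      have hg := gpoly_hasDerivAt hk hkn x
      convert hg using 1
    rw [intervalIntegral.integral_eq_sub_of_hasDerivAt hderiv (hcont.intervalIntegrable 0 t),
      gpoly_zero hk, sub_zero]
  rw [key]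

instance : IsProbabilityMeasure (volume.restrict (Set.Icc (0:ℝ) 1)) := by
  constructor
  rw [Measure.restrict_apply_univ, Real.volume_Icc]
  simp

instance unifCube_prob (n : ℕ) : IsProbabilityMeasure (unifCube n) := by
  rw [unifCube]; infer_instance

lemma map_Iic {n k : ℕ} (hk : 1 ≤ k) (hkn : k ≤ n) {t : ℝ} (ht0 : 0 ≤ t) (ht1 : t ≤ 1) :
    ((unifCube n).map (kthSmallest n k)) (Set.Iic t) = ENNReal.ofReal (gpoly n k t) := by
  rw [Measure.map_apply (measurable_kthSmallest n k hk hkn) measurableSet_Iic]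
  have hpre : kthSmallest n k ⁻¹' Set.Iic t =
      {x : Fin n → ℝ | k ≤ (Finset.univ.filter fun i => x i ≤ t).card} := by
    ext x; exact kth_le_iff hk hkn x t
  rw [hpre, count_measure ht0 ht1, gpoly]
  rw [ENNReal.ofReal_sum_of_nonneg]
  · refine Finset.sum_congr rfl fun j _ => ?_
    rw [ENNReal.ofReal_mul (by positivity), ENNReal.ofReal_natCast,
      ENNReal.ofReal_mul (by positivity), ENNReal.ofReal_pow ht0,
      ENNReal.ofReal_pow (by linarith : (0:ℝ) ≤ 1 - t)]
  · intro j _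
    have : (0:ℝ) ≤ 1 - t := by linarith
    positivity

lemma map_Iic_neg {n k : ℕ} (hk : 1 ≤ k) (hkn : k ≤ n) {t : ℝ} (ht : t < 0) :
    ((unifCube n).map (kthSmallest n k)) (Set.Iic t) = 0 := by
  rw [Measure.map_apply (measurable_kthSmallest n k hk hkn) measurableSet_Iic]
  have hpre : kthSmallest n k ⁻¹' Set.Iic t =
      {x : Fin n → ℝ | k ≤ (Finset.univ.filter fun i => x i ≤ t).card} := by
    ext x; exact kth_le_iff hk hkn x t
  rw [hpre, cut_decomp]
  refine le_antisymm (le_trans (measure_biUnion_finset_le _ _) ?_) zero_le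
  rw [Finset.sum_eq_zero]
  intro S hS
  rw [Finset.mem_filter] at hS
  have hSne : S.Nonempty := Finset.card_pos.1 (by omega)
  obtain ⟨i0, hi0⟩ := hSne
  rw [cutSet, unifCube, Measure.pi_pi]
  apply Finset.prod_eq_zero (Finset.mem_univ i0)
  rw [if_pos hi0, Measure.restrict_apply measurableSet_Iic]
  have : Set.Iic t ∩ Set.Icc (0:ℝ) 1 = ∅ := by
    ext y
    simp only [Set.mem_inter_iff, Set.mem_Iic, Set.mem_Icc, Set.mem_empty_iff_false,
      iff_false, not_and]
    intro hyt hy0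
    linarith
  rw [this, measure_empty]

lemma beta_Iic_general {n k : ℕ} (hk : 1 ≤ k) (hkn : k ≤ n) (t : ℝ) :
    betaMeasure (k:ℝ) ((n:ℝ)-(k:ℝ)+1) (Set.Iic t) =
    ∫⁻ x in Set.Ioo (0:ℝ) 1 ∩ Set.Iic t, ENNReal.ofReal
      (x ^ (k-1:ℕ) * (1-x) ^ (n-k:ℕ) /
        (((k-1).factorial:ℝ) * ((n-k).factorial:ℝ) / (n.factorial:ℝ))) := by
  rw [betaMeasure, withDensity_apply _ measurableSet_Iic, beta_density_eq hk hkn,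
    lintegral_indicator measurableSet_Ioo, Measure.restrict_restrict measurableSet_Ioo]

lemma beta_Iic_neg {n k : ℕ} (hk : 1 ≤ k) (hkn : k ≤ n) {t : ℝ} (ht : t < 0) :
    betaMeasure (k:ℝ) ((n:ℝ)-(k:ℝ)+1) (Set.Iic t) = 0 := by
  rw [beta_Iic_general hk hkn]
  have : Set.Ioo (0:ℝ) 1 ∩ Set.Iic t = ∅ := by
    ext y
    simp only [Set.mem_inter_iff, Set.mem_Ioo, Set.mem_Iic, Set.mem_empty_iff_false,
      iff_false, not_and]
    rintro ⟨hy0, _⟩ hyt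
    linarith
  rw [this, Measure.restrict_empty, lintegral_zero_measure]

lemma beta_Iic_gt_one {n k : ℕ} (hk : 1 ≤ k) (hkn : k ≤ n) {t : ℝ} (ht : 1 < t) :
    betaMeasure (k:ℝ) ((n:ℝ)-(k:ℝ)+1) (Set.Iic t) =
      betaMeasure (k:ℝ) ((n:ℝ)-(k:ℝ)+1) (Set.Iic 1) := by
  rw [beta_Iic_general hk hkn, beta_Iic_general hk hkn]
  congr 1
  have h1 : Set.Ioo (0:ℝ) 1 ∩ Set.Iic t = Set.Ioo 0 1 := by
    apply Set.inter_eq_left.2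
    intro y hy
    exact le_of_lt (lt_trans hy.2 ht)
  have h2 : Set.Ioo (0:ℝ) 1 ∩ Set.Iic 1 = Set.Ioo 0 1 := by
    apply Set.inter_eq_left.2
    intro y hy
    exact le_of_lt hy.2
  rw [h1, h2]

/-- The pushforward of the uniform measure on `[0,1]^n` under the `k`-th order statistic
is the Beta distribution with parameters `k` and `n - k + 1`. -/
theorem order_statistic_beta (n k : ℕ) (hk : 1 ≤ k) (hkn : k ≤ n) :
    (unifCube n).map (kthSmallest n k) = betaMeasure (k : ℝ) ((n : ℝ) - (k : ℝ) + 1) := by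
  have hprob : IsProbabilityMeasure ((unifCube n).map (kthSmallest n k)) :=
    Measure.isProbabilityMeasure_map (measurable_kthSmallest n k hk hkn).aemeasurable
  refine Measure.ext_of_Iic _ _ fun t => ?_
  rcases lt_or_ge t 0 with ht | ht0
  · rw [map_Iic_neg hk hkn ht, beta_Iic_neg hk hkn ht]
  rcases le_or_gt t 1 with ht1 | ht1
  · rw [map_Iic hk hkn ht0 ht1, beta_Iic hk hkn ht0 ht1]
  · have h1 : ((unifCube n).map (kthSmallest n k)) (Set.Iic 1) = 1 := by
      rw [map_Iic hk hkn zero_le_one le_rfl, gpoly_one hkn, ENNReal.ofReal_one]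
    have h2 : ((unifCube n).map (kthSmallest n k)) (Set.Iic t) = 1 := by
      refine le_antisymm (prob_le_one) ?_
      rw [← h1]
      exact measure_mono (Set.Iic_subset_Iic.2 ht1.le)
    rw [h2, beta_Iic_gt_one hk hkn ht1, beta_Iic hk hkn zero_le_one le_rfl,
      gpoly_one hkn, ENNReal.ofReal_one]
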